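/- Let g ∈ K be nonzero and let a, b ∈ R be nonzero elements with b = a·g. Then the R-modules R/(R ∩ gR), gR/(R ∩ gR), R/bR, and R/aR all have finite length, and length_R(R/(R ∩ gR)) − length_R(gR/(R ∩ gR)) = length_R(R/bR) − length_R(R/aR) as integers. -/

import Mathlib

/-!
`R` is a Noetherian local integral domain of Krull dimension `1` with fraction field
`K = FractionRing R`.  The length of an `R`-module is expressed by the predicate
`HasLength R M d`: there is a maximal chain (composition series)
`⊥ = c₀ ⋖ c₁ ⋖ ⋯ ⋖ c_d = ⊤` of submodules of `M`; by Jordan–Hölder this `d` is unique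
when it exists, and its existence expresses that `M` has finite length `d`.
-/

/-- The `R`-module `M` has (finite) length `d`. -/
def HasLength (R M : Type*) [Ring R] [AddCommGroup M] [Module R M] (d : ℕ) : Prop :=
  ∃ c : Fin (d + 1) → Submodule R M, c 0 = ⊥ ∧ c (Fin.last d) = ⊤ ∧
    ∀ i : Fin d, c i.castSucc ⋖ c i.succ

open Submodule


open Submodule


section LengthTheory

variable {R M N : Type*} [Ring R] [AddCommGroup M] [Module R M] [AddCommGroup N] [Module R N]

/-- Turn a `HasLength` witness into a composition series. -/
noncomputable def HasLength.toCS {d : ℕ} (c : Fin (d + 1) → Submodule R M)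
    (h : ∀ i : Fin d, c i.castSucc ⋖ c i.succ) : CompositionSeries (Submodule R M) :=
  ⟨d, c, h⟩

theorem hasLength_unique {d d' : ℕ} (h : HasLength R M d) (h' : HasLength R M d') : d = d' := by
  obtain ⟨c, hc0, hcl, hcs⟩ := h
  obtain ⟨c', hc0', hcl', hcs'⟩ := h'
  let s : CompositionSeries (Submodule R M) := ⟨d, c, hcs⟩
  let s' : CompositionSeries (Submodule R M) := ⟨d', c', hcs'⟩
  have := (CompositionSeries.jordan_holder s s'
    (by show c 0 = c' 0; rw [hc0, hc0']) (by show c _ = c' _; rw [hcl, hcl'])).length_eq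
  exact this

theorem hasLength_exists [IsNoetherian R M] [IsArtinian R M] : ∃ d, HasLength R M d := by
  obtain ⟨s, hs0, hsl⟩ := exists_compositionSeries_of_isNoetherian_isArtinian R M
  exact ⟨s.length, s.toFun, hs0, hsl, s.step⟩

theorem hasLength_congr (e : M ≃ₗ[R] N) {d : ℕ} (h : HasLength R M d) : HasLength R N d := by
  obtain ⟨c, hc0, hcl, hcs⟩ := h
  let o : Submodule R M ≃o Submodule R N := Submodule.orderIsoMapComap e
  refine ⟨fun i => o (c i), ?_, ?_, fun i => ?_⟩
  · show o (c 0) = ⊥; rw [hc0]; exact o.map_bot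
  · show o (c (Fin.last d)) = ⊤; rw [hcl]; exact o.map_top
  · exact (apply_covBy_apply_iff o).2 (hcs i)

end LengthTheory

section Chains

variable {R M : Type*} [Ring R] [AddCommGroup M] [Module R M]

/-- A covering chain between two submodules. -/
def CovChain (x y : Submodule R M) (d : ℕ) : Prop :=
  ∃ c : Fin (d + 1) → Submodule R M, c 0 = x ∧ c (Fin.last d) = y ∧
    ∀ i : Fin d, c i.castSucc ⋖ c i.succ

theorem covChain_trans {x y z : Submodule R M} {d d' : ℕ}
    (h : CovChain x y d) (h' : CovChain y z d') : CovChain x z (d + d') := by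
  obtain ⟨c, hc0, hcl, hcs⟩ := h
  obtain ⟨c', hc0', hcl', hcs'⟩ := h'
  let p : RelSeries {(a, b) : Submodule R M × Submodule R M | a ⋖ b} := ⟨d, c, hcs⟩
  let q : RelSeries {(a, b) : Submodule R M × Submodule R M | a ⋖ b} := ⟨d', c', hcs'⟩
  have hconn : p.last = q.head := by
    show c _ = c' 0
    rw [hcl, hc0']
  refine ⟨(p.smash q hconn).toFun, ?_, ?_, (p.smash q hconn).step⟩
  · show (p.smash q hconn).head = x
    rw [RelSeries.head_smash]; exact hc0
  · show (p.smash q hconn).last = z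
    rw [RelSeries.last_smash]; exact hcl'

theorem covBy_def' {A : Type*} [Preorder A] {a b : A} :
    a ⋖ b ↔ a < b ∧ ∀ ⦃c⦄, a < c → ¬c < b := Iff.rfl

theorem covby_of_covby_Iic {P : Submodule R M} {x y : {p : Submodule R M // p ≤ P}}
    (h : x ⋖ y) : x.1 ⋖ y.1 := by
  rw [covBy_def'] at h ⊢
  refine ⟨Subtype.coe_lt_coe.2 h.1, fun z hxz hzy => ?_⟩
  exact h.2 (c := ⟨z, hzy.le.trans y.2⟩) (Subtype.coe_lt_coe.1 hxz) (Subtype.coe_lt_coe.1 hzy)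

theorem covby_of_covby_Ici {P : Submodule R M} {x y : {p : Submodule R M // P ≤ p}}
    (h : x ⋖ y) : x.1 ⋖ y.1 := by
  rw [covBy_def'] at h ⊢
  refine ⟨Subtype.coe_lt_coe.2 h.1, fun z hxz hzy => ?_⟩
  exact h.2 (c := ⟨z, x.2.trans hxz.le⟩) (Subtype.coe_lt_coe.1 hxz) (Subtype.coe_lt_coe.1 hzy)

theorem covby_subtype_of_covby {P : Submodule R M} (x y : {p : Submodule R M // P ≤ p})
    (h : x.1 ⋖ y.1) : x ⋖ y := by
  rw [covBy_def'] at h ⊢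
  exact ⟨Subtype.coe_lt_coe.1 h.1, fun z hxz hzy =>
    h.2 (Subtype.coe_lt_coe.2 hxz) (Subtype.coe_lt_coe.2 hzy)⟩

theorem covby_subtype_of_covby' {P : Submodule R M} (x y : {p : Submodule R M // p ≤ P})
    (h : x.1 ⋖ y.1) : x ⋖ y := by
  rw [covBy_def'] at h ⊢
  exact ⟨Subtype.coe_lt_coe.1 h.1, fun z hxz hzy =>
    h.2 (Subtype.coe_lt_coe.2 hxz) (Subtype.coe_lt_coe.2 hzy)⟩

theorem hasLength_sub_iff (N : Submodule R M) (d : ℕ) :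
    HasLength R N d ↔ CovChain (⊥ : Submodule R M) N d := by
  set e := Submodule.MapSubtype.orderIso N with he
  constructor
  · rintro ⟨c, hc0, hcl, hcs⟩
    refine ⟨fun i => (e (c i)).1, ?_, ?_, fun i => ?_⟩
    · show Submodule.map N.subtype (c 0) = ⊥
      rw [hc0, Submodule.map_bot]
    · show Submodule.map N.subtype (c (Fin.last d)) = N
      rw [hcl]; exact Submodule.map_subtype_top N
    · exact covby_of_covby_Iic ((apply_covBy_apply_iff e).2 (hcs i))
  · rintro ⟨c, hc0, hcl, hcs⟩
    have hmono : Monotone c := by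
      have : StrictMono c := Fin.strictMono_iff_lt_succ.2 (fun i => (hcs i).lt)
      exact this.monotone
    have hle : ∀ i, c i ≤ N := fun i => by
      rw [← hcl]; exact hmono (Fin.le_last i)
    refine ⟨fun i => e.symm ⟨c i, hle i⟩, ?_, ?_, fun i => ?_⟩
    · rw [e.symm_apply_eq]
      apply Subtype.ext
      show c 0 = Submodule.map N.subtype ⊥
      rw [hc0, Submodule.map_bot]
    · rw [e.symm_apply_eq]
      apply Subtype.ext
      show c (Fin.last d) = Submodule.map N.subtype ⊤
      rw [hcl, Submodule.map_subtype_top]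
    · exact (apply_covBy_apply_iff e.symm).2 (covby_subtype_of_covby' _ _ (hcs i))

theorem hasLength_quot_iff (N : Submodule R M) (d : ℕ) :
    HasLength R (M ⧸ N) d ↔ CovChain N (⊤ : Submodule R M) d := by
  set e := Submodule.comapMkQRelIso N with he
  constructor
  · rintro ⟨c, hc0, hcl, hcs⟩
    refine ⟨fun i => (e (c i)).1, ?_, ?_, fun i => ?_⟩
    · show Submodule.comap N.mkQ (c 0) = N
      rw [hc0, Submodule.comap_bot, Submodule.ker_mkQ]
    · show Submodule.comap N.mkQ (c (Fin.last d)) = ⊤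
      rw [hcl, Submodule.comap_top]
    · exact covby_of_covby_Ici ((apply_covBy_apply_iff e).2 (hcs i))
  · rintro ⟨c, hc0, hcl, hcs⟩
    have hmono : Monotone c := by
      have : StrictMono c := Fin.strictMono_iff_lt_succ.2 (fun i => (hcs i).lt)
      exact this.monotone
    have hle : ∀ i, N ≤ c i := fun i => by
      rw [← hc0]; exact hmono (Fin.zero_le i)
    refine ⟨fun i => e.symm ⟨c i, hle i⟩, ?_, ?_, fun i => ?_⟩
    · rw [e.symm_apply_eq]
      apply Subtype.ext
      show c 0 = Submodule.comap N.mkQ ⊥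
      rw [hc0, Submodule.comap_bot, Submodule.ker_mkQ]
    · rw [e.symm_apply_eq]
      apply Subtype.ext
      show c (Fin.last d) = Submodule.comap N.mkQ ⊤
      rw [hcl, Submodule.comap_top]
    · exact (apply_covBy_apply_iff e.symm).2 (covby_subtype_of_covby _ _ (hcs i))

theorem hasLength_add (N : Submodule R M) {d₁ d₂ : ℕ}
    (h₁ : HasLength R N d₁) (h₂ : HasLength R (M ⧸ N) d₂) : HasLength R M (d₁ + d₂) := by
  have := covChain_trans ((hasLength_sub_iff N d₁).1 h₁) ((hasLength_quot_iff N d₂).1 h₂)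
  exact this

end Chains


open Submodule

variable {R : Type*} [CommRing R] {M M' : Type*} [AddCommGroup M] [Module R M]
  [AddCommGroup M'] [Module R M']

/-- S1: `I ⧸ (I ∩ J)` is isomorphic to the image of `I` in `M ⧸ J`. -/
noncomputable def quotCompEquiv (I J : Submodule R M) :
    (I ⧸ comap I.subtype J) ≃ₗ[R] (Submodule.map J.mkQ I) := by
  let f : I →ₗ[R] M ⧸ J := J.mkQ ∘ₗ I.subtype
  have hker : LinearMap.ker f = comap I.subtype J := by
    rw [LinearMap.ker_comp, Submodule.ker_mkQ]
  have hrange : LinearMap.range f = Submodule.map J.mkQ I := by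
    rw [LinearMap.range_comp, Submodule.range_subtype]
  exact (Submodule.quotEquivOfEq _ _ hker.symm).trans
    ((f.quotKerEquivRange).trans (LinearEquiv.ofEq _ _ hrange))

/-- S2: transporting a relative quotient along an injective map. -/
theorem quot_pair_equiv (f : M →ₗ[R] M') (hf : Function.Injective f) (P Q : Submodule R M)
    (P' Q' : Submodule R M') (hP : Submodule.map f P = P') (hQ : Submodule.map f Q = Q') :
    Nonempty ((P ⧸ comap P.subtype Q) ≃ₗ[R] (P' ⧸ comap P'.subtype Q')) := by
  subst hP hQ
  let e : P ≃ₗ[R] Submodule.map f P := Submodule.equivMapOfInjective f hf P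
  have hmap : Submodule.map (e : P →ₗ[R] Submodule.map f P) (comap P.subtype Q) =
      comap (Submodule.map f P).subtype (Submodule.map f Q) := by
    ext y
    simp only [Submodule.mem_map, Submodule.mem_comap]
    constructor
    · rintro ⟨z, hz, rfl⟩
      refine ⟨z.1, hz, ?_⟩
      show f z.1 = ((e z : Submodule.map f P) : M')
      simp [e, Submodule.coe_equivMapOfInjective_apply]
    · rintro ⟨q, hq, hfq⟩
      obtain ⟨p, hp, hpy⟩ := y.2
      have hfq' : f q = (y : M') := hfq
      have hqp : q = p := hf (by rw [hfq', hpy])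
      refine ⟨⟨p, hp⟩, ?_, ?_⟩
      · show (p : M) ∈ Q; rw [← hqp]; exact hq
      · apply Subtype.ext
        show ((e ⟨p, hp⟩ : Submodule.map f P) : M') = (y : M')
        rw [Submodule.coe_equivMapOfInjective_apply]
        exact hpy
  exact ⟨Submodule.Quotient.equiv _ _ e hmap⟩


section Artinian

variable {R : Type*} [CommRing R]

/-- A f.g. module killed by a maximal ideal is Artinian. -/
theorem isArtinian_of_maximal_smul_eq_bot {M : Type*} [AddCommGroup M] [Module R M]
    [Module.Finite R M] (m : Ideal R) (hm : m.IsMaximal)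
    (h : m • (⊤ : Submodule R M) = ⊥) : IsArtinian R M := by
  letI : Field (R ⧸ m) := Ideal.Quotient.field m
  have e : M ≃ₗ[R] M ⧸ (m • (⊤ : Submodule R M)) :=
    (Submodule.quotEquivOfEqBot _ h).symm
  set V := M ⧸ (m • (⊤ : Submodule R M))
  have : Module.Finite R V := Module.Finite.of_surjective (Submodule.mkQ _)
    (Submodule.mkQ_surjective _)
  have : Module.Finite (R ⧸ m) V := Module.Finite.of_restrictScalars_finite R _ _
  have hart : IsArtinian (R ⧸ m) V := inferInstance
  have : IsArtinian R V := by
    let f : Submodule R V ↪o Submodule (R ⧸ m) V :=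
      { toFun := fun p =>
          { carrier := p
            add_mem' := fun ha hb => p.add_mem ha hb
            zero_mem' := p.zero_mem
            smul_mem' := by
              rintro c x hx
              obtain ⟨r, rfl⟩ := Ideal.Quotient.mk_surjective c
              rw [← Ideal.Quotient.algebraMap_eq, algebraMap_smul]
              exact p.smul_mem r hx }
        inj' := by
          intro p q h
          apply SetLike.coe_injective
          have := congrArg (SetLike.coe (A := Submodule (R ⧸ m) V)) h
          exact this
        map_rel_iff' := Iff.rfl }
    exact f.wellFoundedLT
  exact isArtinian_of_linearEquiv e.symm

theorem isArtinian_quotient_of_pow_le (m : Ideal R) (hm : m.IsMaximal)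
    [IsNoetherianRing R] :
    ∀ (n : ℕ) (I : Ideal R), m ^ n ≤ I → IsArtinian R (R ⧸ I) := by
  intro n
  induction n with
  | zero =>
    intro I hI
    rw [pow_zero, Ideal.one_eq_top, top_le_iff] at hI
    subst hI
    have : Subsingleton (R ⧸ (⊤ : Ideal R)) := by
      have u : Nonempty (Unique (R ⧸ (⊤ : Ideal R))) := Submodule.unique_quotient_iff_eq_top.2 rfl
      exact u.some.instSubsingleton
    infer_instance
  | succ n ih =>
    intro I hI
    set J : Ideal R := I ⊔ m ^ n with hJ
    have hart : IsArtinian R (R ⧸ J) := ih J le_sup_right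
    set N : Submodule R (R ⧸ I) := Submodule.map I.mkQ J with hN
    have hIJ : I ≤ J := le_sup_left
    have hquot : IsArtinian R ((R ⧸ I) ⧸ N) :=
      isArtinian_of_linearEquiv (Submodule.quotientQuotientEquivQuotient I J hIJ).symm
    have hNart : IsArtinian R N := by
      have hfg : Module.Finite R N := by
        have : IsNoetherian R (R ⧸ I) := inferInstance
        exact Module.Finite.iff_fg.2 (IsNoetherian.noetherian N)
      apply isArtinian_of_maximal_smul_eq_bot (R := R) m hm
      rw [eq_bot_iff]
      rw [Submodule.smul_le]
      rintro r hr x -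
      rw [Submodule.mem_bot]
      apply Subtype.ext
      obtain ⟨y, hy, hxy⟩ := x.2
      have hry : r * y ∈ I := by
        have hy' : y ∈ I ⊔ m ^ n := hy
        rw [Submodule.mem_sup] at hy'
        obtain ⟨i, hi, z, hz, rfl⟩ := hy' 
        rw [mul_add]
        refine add_mem (I.mul_mem_left r hi) (hI ?_)
        rw [pow_succ']
        exact Ideal.mul_mem_mul hr hz
      show r • (x : R ⧸ I) = 0
      rw [← hxy, ← map_smul]
      show I.mkQ (r * y) = 0
      rw [← LinearMap.mem_ker, Submodule.ker_mkQ]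
      exact hry
    exact (isArtinian_iff_submodule_quotient N).2 ⟨hNart, hquot⟩

end Artinian


/-- In a domain of Krull dimension 1, a nonzero prime ideal is maximal. -/
theorem prime_maximal_of_dim_one {R : Type} [CommRing R] [IsDomain R]
    (hdim : ringKrullDim R = 1) (P : Ideal R) (hP : P.IsPrime) (hP0 : P ≠ ⊥) :
    P.IsMaximal := by
  by_contra hmax
  obtain ⟨Q, hQmax, hPQ⟩ := Ideal.exists_le_maximal P hP.ne_top
  have hPQne : P ≠ Q := fun h => hmax (h ▸ hQmax)
  let p0 : PrimeSpectrum R := ⟨⊥, Ideal.bot_prime⟩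
  let p1 : PrimeSpectrum R := ⟨P, hP⟩
  let p2 : PrimeSpectrum R := ⟨Q, hQmax.isPrime⟩
  have h01 : p0 < p1 := by
    show (⊥ : Ideal R) < P
    exact lt_of_le_of_ne bot_le (Ne.symm hP0)
  have h12 : p1 < p2 := by
    show P < Q
    exact lt_of_le_of_ne hPQ hPQne
  let s : LTSeries (PrimeSpectrum R) :=
    ⟨2, ![p0, p1, p2], by
      intro i
      fin_cases i
      · exact h01
      · exact h12⟩
  have hle := Order.LTSeries.length_le_krullDim s
  rw [show Order.krullDim (PrimeSpectrum R) = ringKrullDim R from rfl, hdim] at hle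
  norm_num [s] at hle

theorem isArtinian_quotient_dim_one {R : Type} [CommRing R] [IsDomain R] [IsNoetherianRing R]
    [IsLocalRing R] (hdim : ringKrullDim R = 1) (I : Ideal R) (hI : I ≠ ⊥) :
    IsArtinian R (R ⧸ I) := by
  set m := IsLocalRing.maximalIdeal R
  have hm : m.IsMaximal := IsLocalRing.maximalIdeal.isMaximal R
  have hrad : m ≤ I.radical := by
    rw [Ideal.radical_eq_sInf]
    refine le_sInf ?_
    rintro J ⟨hIJ, hJprime⟩
    have hJ0 : J ≠ ⊥ := fun h => hI (le_bot_iff.1 (h ▸ hIJ))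
    have := prime_maximal_of_dim_one hdim J hJprime hJ0
    exact (IsLocalRing.eq_maximalIdeal this).ge
  obtain ⟨n, hn⟩ := Ideal.exists_radical_pow_le_of_fg I (IsNoetherian.noetherian _)
  exact isArtinian_quotient_of_pow_le m hm n I (le_trans (Ideal.pow_right_mono hrad n) hn)


/-- For nonzero `g ∈ K` and nonzero `a, b ∈ R` with `b = a·g`, the
modules `R/(R ∩ gR)`, `gR/(R ∩ gR)`, `R/bR` and `R/aR` have finite lengths
`l₁, l₂, l₃, l₄`, and `l₁ − l₂ = l₃ − l₄` in `ℤ`. -/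
theorem statement15 (R : Type) [CommRing R] [IsDomain R] [IsNoetherianRing R]
    [IsLocalRing R] (hdim : ringKrullDim R = 1)
    (g : FractionRing R) (hg : g ≠ 0)
    (a b : R) (ha : a ≠ 0) (hb : b ≠ 0)
    (hab : algebraMap R (FractionRing R) b = algebraMap R (FractionRing R) a * g) :
    ∃ l₁ l₂ l₃ l₄ : ℕ,
      HasLength R
        ((LinearMap.range (Algebra.linearMap R (FractionRing R))) ⧸
          (Submodule.comap (LinearMap.range (Algebra.linearMap R (FractionRing R))).subtype
            (LinearMap.range (Algebra.linearMap R (FractionRing R)) ⊓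
              Submodule.span R {g}))) l₁ ∧
      HasLength R
        ((Submodule.span R {g} : Submodule R (FractionRing R)) ⧸
          (Submodule.comap (Submodule.span R {g} : Submodule R (FractionRing R)).subtype
            (LinearMap.range (Algebra.linearMap R (FractionRing R)) ⊓
              Submodule.span R {g}))) l₂ ∧
      HasLength R (R ⧸ Ideal.span {b}) l₃ ∧
      HasLength R (R ⧸ Ideal.span {a}) l₄ ∧
      (l₁ : ℤ) - l₂ = (l₃ : ℤ) - l₄ := by
  let K := FractionRing R
  let alg : R →ₗ[R] K := Algebra.linearMap R K
  have halg : Function.Injective alg := IsFractionRing.injective R K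
  set a' : K := algebraMap R K a with ha'def
  set b' : K := algebraMap R K b with hb'def
  have ha' : a' ≠ 0 := fun h => ha ((map_eq_zero_iff (algebraMap R K) halg).1 h)
  have hb' : b' ≠ 0 := fun h => hb ((map_eq_zero_iff (algebraMap R K) halg).1 h)
  -- multiplication by a' as a linear equivalence
  let φ : K ≃ₗ[R] K :=
    { toFun := fun x => a' * x
      map_add' := fun x y => mul_add a' x y
      map_smul' := fun r x => by
        show a' * (r • x) = r • (a' * x)
        exact mul_smul_comm r a' x
      invFun := fun x => a'⁻¹ * x
      left_inv := fun x => by show a'⁻¹ * (a' * x) = x; rw [← mul_assoc, inv_mul_cancel₀ ha', one_mul]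
      right_inv := fun x => by show a' * (a'⁻¹ * x) = x; rw [← mul_assoc, mul_inv_cancel₀ ha', one_mul] }
  set R' : Submodule R K := LinearMap.range (Algebra.linearMap R K) with hR'
  set G : Submodule R K := Submodule.span R {g} with hG
  set A : Submodule R K := Submodule.span R {a'} with hA
  set B : Submodule R K := Submodule.span R {b'} with hB
  set Ia : Ideal R := Ideal.span {a} with hIa
  set Ib : Ideal R := Ideal.span {b} with hIb
  set J : Ideal R := Ia ⊓ Ib with hJdef
  have φinj : Function.Injective (φ : K →ₗ[R] K) := φ.injective
  -- basic image computations
  have f1 : Submodule.map (φ : K →ₗ[R] K) R' = A := by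
    ext x
    simp only [Submodule.mem_map, LinearMap.mem_range, hA, Submodule.mem_span_singleton]
    constructor
    · rintro ⟨y, ⟨r, rfl⟩, rfl⟩
      exact ⟨r, by rw [Algebra.smul_def]; exact (mul_comm _ _)⟩
    · rintro ⟨r, rfl⟩
      exact ⟨algebraMap R K r, ⟨r, rfl⟩, by rw [Algebra.smul_def]; exact (mul_comm _ _)⟩
  have f2 : Submodule.map (φ : K →ₗ[R] K) G = B := by
    rw [hG, Submodule.map_span, Set.image_singleton, hB]
    congr 1
    show ({a' * g} : Set K) = {b'}
    rw [hab]
  have f3a : Submodule.map alg Ia = A := by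
    rw [hIa, ← Ideal.submodule_span_eq, Submodule.map_span, Set.image_singleton]
    rfl
  have f3b : Submodule.map alg Ib = B := by
    rw [hIb, ← Ideal.submodule_span_eq, Submodule.map_span, Set.image_singleton]
    rfl
  have f4 : Submodule.map (φ : K →ₗ[R] K) (R' ⊓ G) = A ⊓ B := by
    rw [Submodule.map_inf _ φinj, f1, f2]
  have f5 : Submodule.map alg (J : Submodule R R) = A ⊓ B := by
    rw [hJdef, Submodule.map_inf _ halg, f3a, f3b]
  have f6 : J ≠ ⊥ := by
    intro h
    have hmem : a * b ∈ J := by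
      refine ⟨Ideal.mem_span_singleton.2 ⟨b, rfl⟩, Ideal.mem_span_singleton.2 ⟨a, mul_comm a b⟩⟩
    rw [h, Submodule.mem_bot] at hmem
    exact mul_ne_zero ha hb hmem
  -- Artinian/Noetherian instances
  haveI : IsNoetherian R R := by rwa [← isNoetherianRing_iff]
  haveI hartJ : IsArtinian R (R ⧸ J) := isArtinian_quotient_dim_one hdim J f6
  haveI : IsNoetherian R (R ⧸ J) := inferInstance
  haveI hartA : IsArtinian R (R ⧸ Ia) :=
    isArtinian_quotient_dim_one hdim Ia (by simpa [hIa] using Ideal.span_singleton_eq_bot.not.2 ha)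
  haveI hartB : IsArtinian R (R ⧸ Ib) :=
    isArtinian_quotient_dim_one hdim Ib (by simpa [hIb] using Ideal.span_singleton_eq_bot.not.2 hb)
  set Na : Submodule R (R ⧸ J) := Submodule.map (Submodule.mkQ (J : Submodule R R)) Ia with hNa
  set Nb : Submodule R (R ⧸ J) := Submodule.map (Submodule.mkQ (J : Submodule R R)) Ib with hNb
  haveI : IsArtinian R Na := isArtinian_of_submodule_of_artinian R (R ⧸ J) Na hartJ
  haveI : IsArtinian R Nb := isArtinian_of_submodule_of_artinian R (R ⧸ J) Nb hartJ
  obtain ⟨l₁, h1⟩ := hasLength_exists (R := R) (M := Na)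
  obtain ⟨l₂, h2⟩ := hasLength_exists (R := R) (M := Nb)
  obtain ⟨l₃, h3⟩ := hasLength_exists (R := R) (M := R ⧸ Ib)
  obtain ⟨l₄, h4⟩ := hasLength_exists (R := R) (M := R ⧸ Ia)
  -- the two decompositions of R/J
  have qa : ((R ⧸ J) ⧸ Na) ≃ₗ[R] R ⧸ Ia :=
    Submodule.quotientQuotientEquivQuotient (J : Submodule R R) Ia inf_le_left
  have qb : ((R ⧸ J) ⧸ Nb) ≃ₗ[R] R ⧸ Ib :=
    Submodule.quotientQuotientEquivQuotient (J : Submodule R R) Ib inf_le_right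
  have hJa : HasLength R (R ⧸ (J : Submodule R R)) (l₁ + l₄) :=
    hasLength_add Na h1 (hasLength_congr qa.symm h4)
  have hJb : HasLength R (R ⧸ (J : Submodule R R)) (l₂ + l₃) :=
    hasLength_add Nb h2 (hasLength_congr qb.symm h3)
  have hsum : l₁ + l₄ = l₂ + l₃ := hasLength_unique hJa hJb
  -- transport l₁ to the first module
  obtain ⟨E1⟩ := quot_pair_equiv (φ : K →ₗ[R] K) φinj R' (R' ⊓ G) A (A ⊓ B) f1 f4
  obtain ⟨E2⟩ := quot_pair_equiv alg halg (Ia : Submodule R R) (J : Submodule R R) A (A ⊓ B)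
    f3a f5
  obtain ⟨E1'⟩ := quot_pair_equiv (φ : K →ₗ[R] K) φinj G (R' ⊓ G) B (A ⊓ B) f2 f4
  obtain ⟨E2'⟩ := quot_pair_equiv alg halg (Ib : Submodule R R) (J : Submodule R R) B (A ⊓ B)
    f3b f5
  have E3 := quotCompEquiv (Ia : Submodule R R) (J : Submodule R R)
  have E3' := quotCompEquiv (Ib : Submodule R R) (J : Submodule R R)
  have hM1 : HasLength R (R' ⧸ (Submodule.comap R'.subtype (R' ⊓ G))) l₁ :=
    hasLength_congr (E1.trans (E2.symm.trans E3)).symm h1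
  have hM2 : HasLength R (G ⧸ (Submodule.comap G.subtype (R' ⊓ G))) l₂ :=
    hasLength_congr (E1'.trans (E2'.symm.trans E3')).symm h2
  exact ⟨l₁, l₂, l₃, l₄, hM1, hM2, h3, h4, by omega⟩
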